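/- Let a,b,c be positive integers, d = gcd(a,b,c) and m = gcd(bc,ac,ab). Then the quotient of ℤ³ by the subgroup J generated by (a,0,0), (0,b,0), (0,0,c), (1,1,1) is isomorphic to ℤ/d ⊕ ℤ/(m/d). -/

import Mathlib

namespace QJaux
open AddSubgroup (zsmul_mem subset_closure closure_le)

local notation "cl" => AddSubgroup.closure

def shear (k : ℤ) : (ℤ × ℤ) ≃+ (ℤ × ℤ) where
  toFun x := (x.1, x.2 + k * x.1)
  invFun x := (x.1, x.2 - k * x.1)
  left_inv x := by simp
  right_inv x := by simp
  map_add' x y := by simp [Prod.ext_iff]; ring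

lemma shear_quot (k p q t : ℤ) :
    Nonempty ((ℤ × ℤ) ⧸ cl {(p, q), (0, t)} ≃+
      (ℤ × ℤ) ⧸ cl {(p, q + k * p), (0, t)}) := by
  refine ⟨QuotientAddGroup.congr _ _ (shear k) ?_⟩
  rw [AddMonoidHom.map_closure]
  congr 1
  rw [Set.image_insert_eq, Set.image_singleton]
  simp [shear]

lemma swap_quot (p q t : ℤ) :
    Nonempty ((ℤ × ℤ) ⧸ cl {(p, q), (0, t)} ≃+
      (ℤ × ℤ) ⧸ cl {(q, p), (t, 0)}) := by
  refine ⟨QuotientAddGroup.congr _ _ (AddEquiv.prodComm) ?_⟩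
  rw [AddMonoidHom.map_closure]
  congr 1
  rw [Set.image_insert_eq, Set.image_singleton]
  simp

lemma base (p t : ℕ) :
    Nonempty ((ℤ × ℤ) ⧸ cl {((p:ℤ), (0:ℤ)), ((0:ℤ), (t:ℤ))} ≃+ ZMod p × ZMod t) := by
  let φ : ℤ × ℤ →+ ZMod p × ZMod t :=
    ((Int.castAddHom (ZMod p)).comp (AddMonoidHom.fst ℤ ℤ)).prod
      ((Int.castAddHom (ZMod t)).comp (AddMonoidHom.snd ℤ ℤ))
  have hφ : ∀ x : ℤ × ℤ, φ x = ((x.1 : ZMod p), (x.2 : ZMod t)) := fun x => rfl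
  have hsurj : Function.Surjective φ := by
    rintro ⟨u, v⟩
    obtain ⟨x, rfl⟩ := ZMod.intCast_surjective u
    obtain ⟨y, rfl⟩ := ZMod.intCast_surjective v
    exact ⟨(x, y), rfl⟩
  have hker : φ.ker = cl {((p:ℤ), (0:ℤ)), ((0:ℤ), (t:ℤ))} := by
    apply le_antisymm
    · rintro ⟨x, y⟩ hxy
      simp only [AddMonoidHom.mem_ker, hφ, Prod.ext_iff, Prod.fst_zero, Prod.snd_zero,
        ZMod.intCast_zmod_eq_zero_iff_dvd] at hxy
      obtain ⟨⟨x1, rfl⟩, ⟨y1, rfl⟩⟩ := hxy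
      have : ((p:ℤ) * x1, (t:ℤ) * y1) = x1 • ((p:ℤ), (0:ℤ)) + y1 • ((0:ℤ), (t:ℤ)) := by
        simp [Prod.ext_iff, mul_comm]
      rw [this]
      exact add_mem (zsmul_mem (subset_closure (by simp)) _)
        (zsmul_mem (subset_closure (by simp)) _)
    · rw [closure_le]
      rintro z hz
      simp only [Set.mem_insert_iff, Set.mem_singleton_iff] at hz
      rcases hz with rfl | rfl <;>
        simp [SetLike.mem_coe, AddMonoidHom.mem_ker, hφ, Prod.ext_iff,
          ZMod.intCast_zmod_eq_zero_iff_dvd]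
  exact ⟨(QuotientAddGroup.quotientAddEquivOfEq hker.symm).trans
    (QuotientAddGroup.quotientKerEquivOfSurjective φ hsurj)⟩

open AddSubgroup (zsmul_mem subset_closure closure_le)


def gcd3 (p t : ℕ) (q : ℤ) : ℕ := Nat.gcd p (Int.gcd q t)

lemma dvd_gcd3_iff {x p t : ℕ} {q : ℤ} :
    x ∣ gcd3 p t q ↔ x ∣ p ∧ (x:ℤ) ∣ q ∧ (x:ℤ) ∣ (t:ℤ) := by
  constructor
  · intro h
    refine ⟨h.trans (Nat.gcd_dvd_left _ _), ?_, ?_⟩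
    · exact (Int.natCast_dvd_natCast.mpr (h.trans (Nat.gcd_dvd_right _ _))).trans
        (Int.gcd_dvd_left _ _)
    · exact (Int.natCast_dvd_natCast.mpr (h.trans (Nat.gcd_dvd_right _ _))).trans
        (Int.gcd_dvd_right _ _)
  · rintro ⟨h1, h2, h3⟩
    exact Nat.dvd_gcd h1 (Int.natCast_dvd_natCast.mp (Int.dvd_coe_gcd h2 h3))

lemma gcd3_eq {p t : ℕ} {q q' : ℤ}
    (h : ∀ x : ℕ, (x ∣ p ∧ (x:ℤ) ∣ q ∧ (x:ℤ) ∣ (t:ℤ)) ↔ (x ∣ p ∧ (x:ℤ) ∣ q' ∧ (x:ℤ) ∣ (t:ℤ))) :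
    gcd3 p t q = gcd3 p t q' := by
  apply Nat.dvd_antisymm
  · exact dvd_gcd3_iff.mpr ((h _).mp (dvd_gcd3_iff.mp dvd_rfl))
  · exact dvd_gcd3_iff.mpr ((h _).mpr (dvd_gcd3_iff.mp dvd_rfl))


lemma T : ∀ p : ℕ, 0 < p → ∀ t : ℕ, 0 < t → ∀ q : ℤ,
    Nonempty ((ℤ × ℤ) ⧸ cl {((p:ℤ), q), ((0:ℤ), (t:ℤ))} ≃+
      ZMod (gcd3 p t q) × ZMod (p * t / gcd3 p t q)) := by
  intro p
  induction p using Nat.strong_induction_on with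
  | _ p IH =>
  intro hp t ht q
  have key : ∀ q₀ : ℤ, 0 < q₀ → q₀ < (p:ℤ) →
      Nonempty ((ℤ × ℤ) ⧸ cl {((p:ℤ), q₀), ((0:ℤ), (t:ℤ))} ≃+
        ZMod (gcd3 p t q₀) × ZMod (p * t / gcd3 p t q₀)) := by
    intro q₀ hq0 hqp
    have hq₀ne : q₀ ≠ 0 := hq0.ne'
    set w : ℕ := Int.gcd q₀ (t:ℤ) with hw
    have hw0 : 0 < w := Int.gcd_pos_iff.mpr (Or.inl hq₀ne)
    have hwq : (w:ℤ) ∣ q₀ := Int.gcd_dvd_left _ _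
    have hwt : (w:ℤ) ∣ (t:ℤ) := Int.gcd_dvd_right _ _
    obtain ⟨q₁, hq₁⟩ := hwq
    have hwtn : w ∣ t := Int.natCast_dvd_natCast.mp hwt
    obtain ⟨t₁, ht₁⟩ := hwtn
    set σ := Int.gcdA q₀ (t:ℤ) with hσ
    set τ := Int.gcdB q₀ (t:ℤ) with hτ
    have hbez : (w:ℤ) = q₀ * σ + (t:ℤ) * τ := Int.gcd_eq_gcd_ab q₀ (t:ℤ)
    have hwne : (w:ℤ) ≠ 0 := by exact_mod_cast hw0.ne'
    have ht₁' : (t:ℤ) = (w:ℤ) * (t₁:ℤ) := by exact_mod_cast ht₁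
    have hunit : q₁ * σ + (t₁:ℤ) * τ = 1 := by
      apply mul_left_cancel₀ hwne
      calc (w:ℤ) * (q₁ * σ + (t₁:ℤ) * τ) = q₀ * σ + (t:ℤ) * τ := by rw [hq₁, ht₁']; ring
      _ = (w:ℤ) := hbez.symm
      _ = (w:ℤ) * 1 := by ring
    set t2 : ℕ := t₁ * p with ht2def
    have ht₁0 : 0 < t₁ := by
      rcases Nat.eq_zero_or_pos t₁ with h | h
      · rw [h, Nat.mul_zero] at ht₁; omega
      · exact h
    have ht2 : 0 < t2 := Nat.mul_pos ht₁0 hp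
    have ht2' : (t2:ℤ) = (t₁:ℤ) * (p:ℤ) := by exact_mod_cast ht2def
    obtain ⟨es⟩ := swap_quot (p:ℤ) q₀ (t:ℤ)
    have hset : cl {(q₀, (p:ℤ)), ((t:ℤ), (0:ℤ))} = cl {((w:ℤ), σ*(p:ℤ)), ((0:ℤ), (t2:ℤ))} := by
      apply le_antisymm <;> rw [closure_le] <;> rintro z hz <;>
        simp only [Set.mem_insert_iff, Set.mem_singleton_iff] at hz
      · rcases hz with rfl | rfl
        · have : (q₀, (p:ℤ)) = q₁ • ((w:ℤ), σ*(p:ℤ)) + τ • ((0:ℤ), (t2:ℤ)) := by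
            simp only [Prod.smul_mk, Prod.mk_add_mk, Prod.mk.injEq, smul_eq_mul]
            constructor
            · linear_combination hq₁
            · linear_combination (-(p:ℤ)) * hunit - τ * ht2'
          rw [this]
          exact add_mem (zsmul_mem (subset_closure (by simp)) _)
            (zsmul_mem (subset_closure (by simp)) _)
        · have : ((t:ℤ), (0:ℤ)) = (t₁:ℤ) • ((w:ℤ), σ*(p:ℤ)) + (-σ) • ((0:ℤ), (t2:ℤ)) := by
            simp only [Prod.smul_mk, Prod.mk_add_mk, Prod.mk.injEq, smul_eq_mul]
            constructor
            · linear_combination ht₁'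
            · linear_combination σ * ht2'
          rw [this]
          exact add_mem (zsmul_mem (subset_closure (by simp)) _)
            (zsmul_mem (subset_closure (by simp)) _)
      · rcases hz with rfl | rfl
        · have : ((w:ℤ), σ*(p:ℤ)) = σ • (q₀, (p:ℤ)) + τ • ((t:ℤ), (0:ℤ)) := by
            simp only [Prod.smul_mk, Prod.mk_add_mk, Prod.mk.injEq, smul_eq_mul]
            constructor
            · linear_combination hbez
            · ring
          rw [this]
          exact add_mem (zsmul_mem (subset_closure (by simp)) _)
            (zsmul_mem (subset_closure (by simp)) _)
        · have : ((0:ℤ), (t2:ℤ)) = (t₁:ℤ) • (q₀, (p:ℤ)) + (-q₁) • ((t:ℤ), (0:ℤ)) := by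
            simp only [Prod.smul_mk, Prod.mk_add_mk, Prod.mk.injEq, smul_eq_mul]
            constructor
            · linear_combination (-(t₁:ℤ)) * hq₁ + q₁ * ht₁'
            · linear_combination ht2'
          rw [this]
          exact add_mem (zsmul_mem (subset_closure (by simp)) _)
            (zsmul_mem (subset_closure (by simp)) _)
    have hwlt : w < p := by
      have h1 : w ∣ q₀.natAbs := Nat.gcd_dvd_left _ _
      have h2 : q₀.natAbs ≠ 0 := by omega
      have h3 : w ≤ q₀.natAbs := Nat.le_of_dvd (Nat.pos_of_ne_zero h2) h1
      have h4 : q₀.natAbs < p := by omega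
      omega
    obtain ⟨e4⟩ := IH w hwlt hw0 t2 ht2 (σ*(p:ℤ))
    have hgg : gcd3 w t2 (σ*(p:ℤ)) = gcd3 p t q₀ := by
      apply Nat.dvd_antisymm
      · obtain ⟨h1, h2, h3⟩ := dvd_gcd3_iff.mp (dvd_refl (gcd3 w t2 (σ*(p:ℤ))))
        set g' := gcd3 w t2 (σ*(p:ℤ)) with hg'
        have hp' : (g':ℤ) ∣ (p:ℤ) := by
          have : (p:ℤ) = q₁*(σ*(p:ℤ)) + τ*(t2:ℤ) := by
            linear_combination (-(p:ℤ)) * hunit - τ * ht2'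
          rw [this]
          exact dvd_add (h2.mul_left q₁) (h3.mul_left τ)
        refine dvd_gcd3_iff.mpr ⟨Int.natCast_dvd_natCast.mp hp', ?_, ?_⟩
        · exact ((Int.natCast_dvd_natCast.mpr h1).trans (Int.gcd_dvd_left _ _))
        · exact ((Int.natCast_dvd_natCast.mpr h1).trans (Int.gcd_dvd_right _ _))
      · obtain ⟨h1, h2, h3⟩ := dvd_gcd3_iff.mp (dvd_refl (gcd3 p t q₀))
        refine dvd_gcd3_iff.mpr ⟨?_, ?_, ?_⟩
        · exact Int.natCast_dvd_natCast.mp (Int.dvd_coe_gcd h2 h3)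
        · exact (Int.natCast_dvd_natCast.mpr h1).mul_left σ
        · rw [ht2']
          exact (Int.natCast_dvd_natCast.mpr h1).mul_left (t₁:ℤ)
    have hmm : w * t2 = p * t := by
      rw [ht2def, ← Nat.mul_assoc, ← ht₁, Nat.mul_comm]
    rw [hgg, hmm] at e4
    exact ⟨es.trans ((QuotientAddGroup.quotientAddEquivOfEq hset).trans e4)⟩
  obtain ⟨e1⟩ := shear_quot (-(q / (p:ℤ))) (p:ℤ) q (t:ℤ)
  have hpz : (0:ℤ) < (p:ℤ) := by exact_mod_cast hp
  have hq' : q + (-(q / (p:ℤ))) * (p:ℤ) = q % (p:ℤ) := by rw [Int.emod_def]; ring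
  rw [hq'] at e1
  have hgshift : gcd3 p t (q % (p:ℤ)) = gcd3 p t q := by
    apply gcd3_eq
    intro x
    constructor
    · rintro ⟨h1, h2, h3⟩
      refine ⟨h1, ?_, h3⟩
      have hx : (x:ℤ) ∣ (p:ℤ) := Int.natCast_dvd_natCast.mpr h1
      have : q = q % (p:ℤ) + (p:ℤ) * (q / (p:ℤ)) := by rw [Int.emod_def]; ring
      rw [this]
      exact dvd_add h2 (hx.mul_right _)
    · rintro ⟨h1, h2, h3⟩
      refine ⟨h1, ?_, h3⟩
      have hx : (x:ℤ) ∣ (p:ℤ) := Int.natCast_dvd_natCast.mpr h1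
      rw [Int.emod_def]
      exact dvd_sub h2 (hx.mul_right _)
  have hmod_nonneg : 0 ≤ q % (p:ℤ) := Int.emod_nonneg _ hpz.ne'
  have hmod_lt : q % (p:ℤ) < (p:ℤ) := Int.emod_lt_of_pos _ hpz
  by_cases hq0 : q % (p:ℤ) = 0
  · rw [hq0] at e1
    by_cases hpt : p ∣ t
    · obtain ⟨e2⟩ := base p t
      have hg : gcd3 p t q = p := by
        rw [← hgshift, hq0]
        unfold gcd3
        rw [Int.gcd_zero_left, Int.natAbs_natCast]
        exact Nat.gcd_eq_left hpt
      rw [hg, Nat.mul_div_cancel_left t hp]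
      exact ⟨e1.trans e2⟩
    · have hsetq : cl {((p:ℤ), (0:ℤ)), ((0:ℤ), (t:ℤ))} =
          cl {((p:ℤ), (t:ℤ)), ((0:ℤ), (t:ℤ))} := by
        apply le_antisymm <;> rw [closure_le] <;> rintro z hz <;>
          simp only [Set.mem_insert_iff, Set.mem_singleton_iff] at hz
        · rcases hz with rfl | rfl
          · have : ((p:ℤ), (0:ℤ)) = ((p:ℤ), (t:ℤ)) + (-1 : ℤ) • ((0:ℤ), (t:ℤ)) := by
              simp [Prod.ext_iff]
            rw [this]
            exact add_mem (subset_closure (by simp)) (zsmul_mem (subset_closure (by simp)) _)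
          · exact subset_closure (by simp)
        · rcases hz with rfl | rfl
          · have : ((p:ℤ), (t:ℤ)) = ((p:ℤ), (0:ℤ)) + ((0:ℤ), (t:ℤ)) := by
              simp [Prod.ext_iff]
            rw [this]
            exact add_mem (subset_closure (by simp)) (subset_closure (by simp))
          · exact subset_closure (by simp)
      obtain ⟨e2⟩ := shear_quot (-((t:ℤ) / (p:ℤ))) (p:ℤ) (t:ℤ) (t:ℤ)
      have hq2 : (t:ℤ) + (-((t:ℤ) / (p:ℤ))) * (p:ℤ) = (t:ℤ) % (p:ℤ) := by
        rw [Int.emod_def]; ring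
      rw [hq2] at e2
      have hr0 : 0 < (t:ℤ) % (p:ℤ) := by
        rcases lt_or_eq_of_le (Int.emod_nonneg (t:ℤ) hpz.ne') with h | h
        · exact h
        · exfalso
          apply hpt
          have : (p:ℤ) ∣ (t:ℤ) := Int.dvd_of_emod_eq_zero h.symm
          exact_mod_cast this
      have hrp : (t:ℤ) % (p:ℤ) < (p:ℤ) := Int.emod_lt_of_pos _ hpz
      obtain ⟨e3⟩ := key ((t:ℤ) % (p:ℤ)) hr0 hrp
      have hgr : gcd3 p t ((t:ℤ) % (p:ℤ)) = gcd3 p t q := by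
        rw [← hgshift, hq0]
        apply gcd3_eq
        intro x
        constructor
        · rintro ⟨h1, _, h3⟩
          exact ⟨h1, dvd_zero _, h3⟩
        · rintro ⟨h1, _, h3⟩
          refine ⟨h1, ?_, h3⟩
          rw [Int.emod_def]
          exact dvd_sub h3 ((Int.natCast_dvd_natCast.mpr h1).mul_right _)
      rw [← hgr]
      exact ⟨e1.trans ((QuotientAddGroup.quotientAddEquivOfEq hsetq).trans (e2.trans e3))⟩
  · obtain ⟨e3⟩ := key (q % (p:ℤ)) (lt_of_le_of_ne hmod_nonneg (Ne.symm hq0)) hmod_lt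
    rw [hgshift] at e3
    exact ⟨e1.trans e3⟩

end QJaux

/-- Let `a,b,c` be positive integers, `d = gcd(a,b,c)`, `m = gcd(bc,ac,ab)`. Then
`ℤ³ / ⟨(a,0,0), (0,b,0), (0,0,c), (1,1,1)⟩ ≅ ℤ/d ⊕ ℤ/(m/d)`. -/
theorem quotient_by_J_iso (a b c : ℕ) (ha : 0 < a) (hb : 0 < b) (hc : 0 < c) :
    Nonempty ((ℤ × ℤ × ℤ) ⧸ AddSubgroup.closure
        {((a : ℤ), (0 : ℤ), (0 : ℤ)), ((0 : ℤ), (b : ℤ), (0 : ℤ)),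
          ((0 : ℤ), (0 : ℤ), (c : ℤ)), ((1 : ℤ), (1 : ℤ), (1 : ℤ))} ≃+
      ZMod (Nat.gcd a (Nat.gcd b c)) ×
        ZMod (Nat.gcd (b * c) (Nat.gcd (a * c) (a * b)) / Nat.gcd a (Nat.gcd b c))) := by
  classical
  open AddSubgroup in
  set S : Set (ℤ × ℤ × ℤ) :=
    {((a : ℤ), (0 : ℤ), (0 : ℤ)), ((0 : ℤ), (b : ℤ), (0 : ℤ)),
      ((0 : ℤ), (0 : ℤ), (c : ℤ)), ((1 : ℤ), (1 : ℤ), (1 : ℤ))} with hS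
  set L : AddSubgroup (ℤ × ℤ) :=
    AddSubgroup.closure {((a:ℤ), (0:ℤ)), ((0:ℤ), (b:ℤ)), ((c:ℤ), (c:ℤ))} with hLdef
  let sub : ℤ × ℤ × ℤ →+ ℤ × ℤ :=
    AddMonoidHom.mk' (fun w => (w.1 - w.2.2, w.2.1 - w.2.2)) (by
      rintro ⟨x, y, z⟩ ⟨x', y', z'⟩
      simp only [Prod.fst_add, Prod.snd_add, Prod.mk_add_mk, Prod.mk.injEq]
      constructor <;> ring)
  let φ : ℤ × ℤ × ℤ →+ (ℤ × ℤ) ⧸ L := (QuotientAddGroup.mk' L).comp sub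
  have hφ : ∀ w : ℤ × ℤ × ℤ,
      φ w = QuotientAddGroup.mk (w.1 - w.2.2, w.2.1 - w.2.2) := fun w => rfl
  have hsurj : Function.Surjective φ := by
    intro x
    obtain ⟨⟨u0, v0⟩, rfl⟩ := QuotientAddGroup.mk'_surjective L x
    exact ⟨(u0, v0, 0), by simp [hφ, QuotientAddGroup.mk'_apply]⟩
  have hker : φ.ker = AddSubgroup.closure S := by
    apply le_antisymm
    · rintro ⟨x, y, z⟩ hxyz
      have hmem : ((x - z, y - z) : ℤ × ℤ) ∈ L := by
        rw [AddMonoidHom.mem_ker, hφ] at hxyz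
        exact (QuotientAddGroup.eq_zero_iff _).mp hxyz
      have key : ∀ wv : ℤ × ℤ, wv ∈ L → ((wv.1, wv.2, (0:ℤ)) : ℤ × ℤ × ℤ) ∈
          AddSubgroup.closure S := by
        intro wv hwv
        refine AddSubgroup.closure_induction ?_ ?_ ?_ ?_ hwv
        · rintro x0 hx0
          simp only [Set.mem_insert_iff, Set.mem_singleton_iff] at hx0
          rcases hx0 with rfl | rfl | rfl
          · exact AddSubgroup.subset_closure (by simp [hS])
          · exact AddSubgroup.subset_closure (by simp [hS])
          · have : ((((c:ℤ), (c:ℤ)) : ℤ × ℤ).1, (((c:ℤ), (c:ℤ)) : ℤ × ℤ).2, (0:ℤ)) =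
                (c:ℤ) • ((1:ℤ), (1:ℤ), (1:ℤ)) + (-1 : ℤ) • ((0:ℤ), (0:ℤ), (c:ℤ)) := by
              simp [Prod.ext_iff]
            rw [this]
            exact add_mem (zsmul_mem (AddSubgroup.subset_closure (by simp [hS])) _)
              (zsmul_mem (AddSubgroup.subset_closure (by simp [hS])) _)
        · exact (AddSubgroup.closure S).zero_mem
        · intro x0 y0 _ _ px py
          have : (((x0 + y0).1, (x0 + y0).2, (0:ℤ)) : ℤ × ℤ × ℤ) =
              (x0.1, x0.2, (0:ℤ)) + (y0.1, y0.2, (0:ℤ)) := by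
            simp [Prod.ext_iff]
          rw [this]; exact add_mem px py
        · intro x0 _ px
          have : (((-x0).1, (-x0).2, (0:ℤ)) : ℤ × ℤ × ℤ) = -(x0.1, x0.2, (0:ℤ)) := by
            simp [Prod.ext_iff]
          rw [this]; exact neg_mem px
      have hdecomp : ((x, y, z) : ℤ × ℤ × ℤ) =
          (x - z, y - z, (0:ℤ)) + z • ((1:ℤ), (1:ℤ), (1:ℤ)) := by
        simp [Prod.ext_iff]
      rw [hdecomp]
      exact add_mem (key _ hmem)
        (zsmul_mem (AddSubgroup.subset_closure (by simp [hS])) _)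
    · rw [AddSubgroup.closure_le]
      rintro w hw
      simp only [hS, Set.mem_insert_iff, Set.mem_singleton_iff] at hw
      have hmk : ∀ u0 : ℤ × ℤ, u0 ∈ L → ((QuotientAddGroup.mk u0 : (ℤ × ℤ) ⧸ L) = 0) :=
        fun u0 hu0 => (QuotientAddGroup.eq_zero_iff _).mpr hu0
      rcases hw with rfl | rfl | rfl | rfl
      · simp only [SetLike.mem_coe, AddMonoidHom.mem_ker, hφ]
        apply hmk
        simpa using AddSubgroup.subset_closure (show ((a:ℤ), (0:ℤ)) ∈ _ by simp)
      · simp only [SetLike.mem_coe, AddMonoidHom.mem_ker, hφ]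
        apply hmk
        simpa using AddSubgroup.subset_closure (show ((0:ℤ), (b:ℤ)) ∈ _ by simp)
      · simp only [SetLike.mem_coe, AddMonoidHom.mem_ker, hφ]
        apply hmk
        have : ((0:ℤ) - (c:ℤ), (0:ℤ) - (c:ℤ)) = -(((c:ℤ), (c:ℤ)) : ℤ × ℤ) := by
          simp [Prod.ext_iff]
        rw [this]
        exact neg_mem (AddSubgroup.subset_closure (by simp))
      · simp only [SetLike.mem_coe, AddMonoidHom.mem_ker, hφ]
        apply hmk
        simp only [sub_self]
        exact L.zero_mem
  have e0 : (ℤ × ℤ × ℤ) ⧸ AddSubgroup.closure S ≃+ (ℤ × ℤ) ⧸ L :=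
    (QuotientAddGroup.quotientAddEquivOfEq hker.symm).trans
      (QuotientAddGroup.quotientKerEquivOfSurjective φ hsurj)
  -- triangularize L
  set d1 : ℕ := Nat.gcd a c with hd1def
  have hd1 : 0 < d1 := Nat.gcd_pos_of_pos_left _ ha
  obtain ⟨a₁, ha₁⟩ : d1 ∣ a := Nat.gcd_dvd_left a c
  obtain ⟨c₁, hc₁⟩ : d1 ∣ c := Nat.gcd_dvd_right a c
  have ha₁' : (a:ℤ) = (d1:ℤ) * (a₁:ℤ) := by exact_mod_cast ha₁
  have hc₁' : (c:ℤ) = (d1:ℤ) * (c₁:ℤ) := by exact_mod_cast hc₁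
  set uB := Int.gcdA (a:ℤ) (c:ℤ) with huB
  set vB := Int.gcdB (a:ℤ) (c:ℤ) with hvB
  have hbez1 : ((d1:ℕ):ℤ) = (a:ℤ) * uB + (c:ℤ) * vB := by
    have := Int.gcd_eq_gcd_ab (a:ℤ) (c:ℤ)
    rwa [Int.gcd_natCast_natCast] at this
  have hd1ne : ((d1:ℕ):ℤ) ≠ 0 := by exact_mod_cast hd1.ne'
  have hu1 : (a₁:ℤ) * uB + (c₁:ℤ) * vB = 1 := by
    apply mul_left_cancel₀ hd1ne
    calc ((d1:ℕ):ℤ) * ((a₁:ℤ) * uB + (c₁:ℤ) * vB) = (a:ℤ) * uB + (c:ℤ) * vB := by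
          rw [ha₁', hc₁']; ring
    _ = ((d1:ℕ):ℤ) := hbez1.symm
    _ = ((d1:ℕ):ℤ) * 1 := by ring
  set t : ℕ := Nat.gcd b (a₁ * c) with htdef
  have ht0 : 0 < t := Nat.gcd_pos_of_pos_left _ hb
  obtain ⟨b₁, hb₁⟩ : t ∣ b := Nat.gcd_dvd_left _ _
  obtain ⟨e₁, he₁⟩ : t ∣ a₁ * c := Nat.gcd_dvd_right _ _
  have hb₁' : (b:ℤ) = (t:ℤ) * (b₁:ℤ) := by exact_mod_cast hb₁
  have he₁' : (a₁:ℤ) * (c:ℤ) = (t:ℤ) * (e₁:ℤ) := by exact_mod_cast he₁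
  set β := Int.gcdA (b:ℤ) ((a₁:ℤ) * (c:ℤ)) with hβ
  set γ := Int.gcdB (b:ℤ) ((a₁:ℤ) * (c:ℤ)) with hγ
  have hbez2 : ((t:ℕ):ℤ) = (b:ℤ) * β + ((a₁:ℤ) * (c:ℤ)) * γ := by
    have := Int.gcd_eq_gcd_ab (b:ℤ) ((a₁:ℤ) * (c:ℤ))
    have hcast : ((a₁:ℤ) * (c:ℤ)) = ((a₁ * c : ℕ) : ℤ) := by push_cast; ring
    rw [hcast, Int.gcd_natCast_natCast, ← hcast] at this
    exact this
  have hL : L = AddSubgroup.closure {(((d1:ℕ):ℤ), vB * (c:ℤ)), ((0:ℤ), ((t:ℕ):ℤ))} := by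
    rw [hLdef]
    apply le_antisymm <;> rw [AddSubgroup.closure_le] <;> rintro z hz <;>
      simp only [Set.mem_insert_iff, Set.mem_singleton_iff] at hz
    · rcases hz with rfl | rfl | rfl
      · have : (((a:ℕ):ℤ), (0:ℤ)) = (a₁:ℤ) • (((d1:ℕ):ℤ), vB * (c:ℤ)) +
            (-(vB * (e₁:ℤ))) • ((0:ℤ), ((t:ℕ):ℤ)) := by
          simp only [Prod.smul_mk, Prod.mk_add_mk, Prod.mk.injEq, smul_eq_mul]
          constructor
          · linear_combination ha₁'
          · linear_combination (-vB) * he₁'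
        rw [this]
        exact add_mem (zsmul_mem (AddSubgroup.subset_closure (by simp)) _)
          (zsmul_mem (AddSubgroup.subset_closure (by simp)) _)
      · have : ((0:ℤ), ((b:ℕ):ℤ)) = (b₁:ℤ) • ((0:ℤ), ((t:ℕ):ℤ)) := by
          simp only [Prod.smul_mk, Prod.mk.injEq, smul_eq_mul]
          constructor
          · ring
          · linear_combination hb₁'
        rw [this]
        exact zsmul_mem (AddSubgroup.subset_closure (by simp)) _
      · have : (((c:ℕ):ℤ), ((c:ℕ):ℤ)) = (c₁:ℤ) • (((d1:ℕ):ℤ), vB * (c:ℤ)) +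
            (uB * (e₁:ℤ)) • ((0:ℤ), ((t:ℕ):ℤ)) := by
          simp only [Prod.smul_mk, Prod.mk_add_mk, Prod.mk.injEq, smul_eq_mul]
          constructor
          · linear_combination hc₁'
          · linear_combination (-(c:ℤ)) * hu1 + uB * he₁'
        rw [this]
        exact add_mem (zsmul_mem (AddSubgroup.subset_closure (by simp)) _)
          (zsmul_mem (AddSubgroup.subset_closure (by simp)) _)
    · rcases hz with rfl | rfl
      · have : (((d1:ℕ):ℤ), vB * (c:ℤ)) = uB • (((a:ℕ):ℤ), (0:ℤ)) +
            vB • (((c:ℕ):ℤ), ((c:ℕ):ℤ)) := by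
          simp only [Prod.smul_mk, Prod.mk_add_mk, Prod.mk.injEq, smul_eq_mul]
          constructor
          · linear_combination hbez1
          · ring
        rw [this]
        exact add_mem (zsmul_mem (AddSubgroup.subset_closure (by simp)) _)
          (zsmul_mem (AddSubgroup.subset_closure (by simp)) _)
      · have : ((0:ℤ), ((t:ℕ):ℤ)) = β • ((0:ℤ), ((b:ℕ):ℤ)) +
            ((γ * (a₁:ℤ)) • (((c:ℕ):ℤ), ((c:ℕ):ℤ)) +
              (-(γ * (c₁:ℤ))) • (((a:ℕ):ℤ), (0:ℤ))) := by
          simp only [Prod.smul_mk, Prod.mk_add_mk, Prod.mk.injEq, smul_eq_mul]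
          constructor
          · linear_combination γ * (c₁:ℤ) * ha₁' - γ * (a₁:ℤ) * hc₁'
          · linear_combination hbez2
        rw [this]
        exact add_mem (zsmul_mem (AddSubgroup.subset_closure (by simp)) _)
          (add_mem (zsmul_mem (AddSubgroup.subset_closure (by simp)) _)
            (zsmul_mem (AddSubgroup.subset_closure (by simp)) _))
  obtain ⟨eT⟩ := QJaux.T d1 hd1 t ht0 (vB * (c:ℤ))
  have hg : QJaux.gcd3 d1 t (vB * (c:ℤ)) = Nat.gcd a (Nat.gcd b c) := by
    apply Nat.dvd_antisymm
    · obtain ⟨h1, h2, h3⟩ := QJaux.dvd_gcd3_iff.mp (dvd_refl (QJaux.gcd3 d1 t (vB * (c:ℤ))))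
      have hgt : QJaux.gcd3 d1 t (vB * (c:ℤ)) ∣ t := Int.natCast_dvd_natCast.mp h3
      refine Nat.dvd_gcd (h1.trans (Nat.gcd_dvd_left a c)) (Nat.dvd_gcd ?_ ?_)
      · exact hgt.trans (Nat.gcd_dvd_left _ _)
      · exact h1.trans (Nat.gcd_dvd_right a c)
    · set d : ℕ := Nat.gcd a (Nat.gcd b c) with hd
      have hda : d ∣ a := Nat.gcd_dvd_left _ _
      have hdb : d ∣ b := (Nat.gcd_dvd_right _ _).trans (Nat.gcd_dvd_left _ _)
      have hdc : d ∣ c := (Nat.gcd_dvd_right _ _).trans (Nat.gcd_dvd_right _ _)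
      refine QJaux.dvd_gcd3_iff.mpr ⟨Nat.dvd_gcd hda hdc, ?_, ?_⟩
      · exact ((Int.natCast_dvd_natCast.mpr hdc)).mul_left vB
      · exact Int.natCast_dvd_natCast.mpr (Nat.dvd_gcd hdb (hdc.mul_left a₁))
  have hm : d1 * t = Nat.gcd (b * c) (Nat.gcd (a * c) (a * b)) := by
    have h1 : d1 * t = Nat.gcd (d1 * b) (d1 * (a₁ * c)) := (Nat.gcd_mul_left d1 b (a₁ * c)).symm
    have h2 : d1 * (a₁ * c) = a * c := by rw [← Nat.mul_assoc, ← ha₁]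
    have h3 : d1 * b = Nat.gcd (a * b) (c * b) := by
      rw [hd1def, Nat.gcd_mul_right]
    rw [h1, h2, h3]
    apply Nat.dvd_antisymm
    · refine Nat.dvd_gcd ?_ (Nat.dvd_gcd ?_ ?_)
      · exact (Nat.gcd_dvd_left _ _).trans
          ((Nat.gcd_dvd_right (a*b) (c*b)).trans (dvd_of_eq (Nat.mul_comm c b)))
      · exact Nat.gcd_dvd_right _ _
      · exact (Nat.gcd_dvd_left _ _).trans (Nat.gcd_dvd_left _ _)
    · refine Nat.dvd_gcd (Nat.dvd_gcd ?_ ?_) ?_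
      · exact (Nat.gcd_dvd_right _ _).trans (Nat.gcd_dvd_right _ _)
      · exact (Nat.gcd_dvd_left _ _).trans (dvd_of_eq (Nat.mul_comm b c))
      · exact (Nat.gcd_dvd_right _ _).trans (Nat.gcd_dvd_left _ _)
  rw [hg, hm] at eT
  exact ⟨e0.trans ((QuotientAddGroup.quotientAddEquivOfEq hL).trans eT)⟩
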